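/- Fix a player i with action set of size m. Suppose at each round t the player's strategy x_t ∈ Δ_m satisfies (Q_t)ᵀ x_t = x_t where Q_t is the row-stochastic matrix whose a-th row is y_{a,t} ∈ Δ_m, and the a-th expert receives utility vector u_{a,t} = x_t(a)·u_t. Then for every row-stochastic matrix M ∈ [0,1]^{m×m}, the swap regret Σ_{t=1}^T ⟨x_t, M u_t − u_t⟩ equals Σ_{a=1}^m Σ_{t=1}^T ⟨M(a,·) − y_{a,t}, u_{a,t}⟩, i.e., the sum over experts a of the external regret of expert a against comparator M(a,·). -/

import Mathlib

/-- Blum–Mansour reduction identity: if at each round `x t` is a stationary distribution of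
the row-stochastic matrix whose `a`-th row is `y a t`, and expert `a` receives the utility
vector `u_{a,t} = x t a • u t`, then the swap regret against any row-stochastic `M` equals
the sum over experts of their external regrets against the rows of `M`. -/
theorem stmt_10 (T m : ℕ)
    (x : ℕ → Fin m → ℝ) (y : Fin m → ℕ → Fin m → ℝ) (u : ℕ → Fin m → ℝ)
    (hxsimplex : ∀ t ∈ Finset.Icc 1 T, (∀ a, 0 ≤ x t a) ∧ ∑ a, x t a = 1)
    (hysimplex : ∀ a, ∀ t ∈ Finset.Icc 1 T, (∀ b, 0 ≤ y a t b) ∧ ∑ b, y a t b = 1)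
    (hstationary : ∀ t ∈ Finset.Icc 1 T, ∀ b, ∑ a, y a t b * x t a = x t b)
    (M : Fin m → Fin m → ℝ)
    (hM : ∀ a, (∀ b, 0 ≤ M a b) ∧ ∑ b, M a b = 1) :
    ∑ t ∈ Finset.Icc 1 T, ∑ a, x t a * ((∑ b, M a b * u t b) - u t a)
      = ∑ a, ∑ t ∈ Finset.Icc 1 T, ∑ b, (M a b - y a t b) * (x t a * u t b) := by
  conv_rhs => rw [Finset.sum_comm]
  apply Finset.sum_congr rfl
  intro t ht
  have key : ∑ a, ∑ b, y a t b * (x t a * u t b) = ∑ a, x t a * u t a := by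
    rw [Finset.sum_comm]
    apply Finset.sum_congr rfl
    intro b _
    have h := hstationary t ht b
    calc ∑ a, y a t b * (x t a * u t b) = (∑ a, y a t b * x t a) * u t b := by
          rw [Finset.sum_mul]; exact Finset.sum_congr rfl fun a _ => by ring
      _ = x t b * u t b := by rw [h]
  calc ∑ a, x t a * ((∑ b, M a b * u t b) - u t a)
      = (∑ a, ∑ b, M a b * (x t a * u t b)) - ∑ a, x t a * u t a := by
        rw [← Finset.sum_sub_distrib]
        apply Finset.sum_congr rfl
        intro a _
        rw [mul_sub, Finset.mul_sum]
        congr 1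
        · exact Finset.sum_congr rfl fun b _ => by ring
    _ = (∑ a, ∑ b, M a b * (x t a * u t b)) - ∑ a, ∑ b, y a t b * (x t a * u t b) := by
        rw [key]
    _ = ∑ a, ∑ b, (M a b - y a t b) * (x t a * u t b) := by
        rw [← Finset.sum_sub_distrib]
        apply Finset.sum_congr rfl
        intro a _
        rw [← Finset.sum_sub_distrib]
        exact Finset.sum_congr rfl fun b _ => by ring
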